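/- Let ρ > 0, B ∈ ℝ, B₀ ≠ 0, γ ∈ ℝ, with B ≠ 0 or ρ^γ > B₀², and let f = 4ρ^γ / (-(B² + B₀² - ρ^γ) + √((B² + B₀² - ρ^γ)² + 4B²ρ^γ)) (interpreted as 2ρ^γ/(ρ^γ - B₀²) when B = 0 and ρ^γ > B₀²). Define α = (B₀²/ρ)·f/(f-2). Then α = (B² + B₀²)/ρ + 2ρ^{γ-1}/f, and also α = ρ^{γ-1} + B²f/(2ρ) when B ≠ 0. In particular α > 0. -/

import Mathlib

theorem stmt_13 (γ B₀ ρ B : ℝ) (hρ : 0 < ρ) (hB₀ : B₀ ≠ 0)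
    (hcase : B ≠ 0 ∨ B₀ ^ 2 < ρ ^ γ)
    (f α : ℝ)
    (hf : f = 4 * ρ ^ γ / (-(B ^ 2 + B₀ ^ 2 - ρ ^ γ) +
      Real.sqrt ((B ^ 2 + B₀ ^ 2 - ρ ^ γ) ^ 2 + 4 * B ^ 2 * ρ ^ γ)))
    (hα : α = (B₀ ^ 2 / ρ) * f / (f - 2)) :
    α = (B ^ 2 + B₀ ^ 2) / ρ + 2 * ρ ^ (γ - 1) / f
    ∧ (B ≠ 0 → α = ρ ^ (γ - 1) + B ^ 2 * f / (2 * ρ))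
    ∧ 0 < α := by
  have hργ : 0 < ρ ^ γ := Real.rpow_pos_of_pos hρ γ
  have hB₀2 : 0 < B₀ ^ 2 := lt_of_le_of_ne (sq_nonneg _) (Ne.symm (pow_ne_zero 2 hB₀))
  obtain ⟨c, hc⟩ : ∃ c : ℝ, c = B ^ 2 + B₀ ^ 2 - ρ ^ γ := ⟨_, rfl⟩
  rw [← hc] at hf
  obtain ⟨s, hs⟩ : ∃ s : ℝ, s = Real.sqrt (c ^ 2 + 4 * B ^ 2 * ρ ^ γ) := ⟨_, rfl⟩
  rw [← hs] at hf
  obtain ⟨d, hd⟩ : ∃ d : ℝ, d = -c + s := ⟨_, rfl⟩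
  rw [← hd] at hf
  have hsnn : 0 ≤ s := hs ▸ Real.sqrt_nonneg _
  have hs2 : s ^ 2 = c ^ 2 + 4 * B ^ 2 * ρ ^ γ := by
    rw [hs]; exact Real.sq_sqrt (by nlinarith [sq_nonneg c, sq_nonneg B])
  have hcs : c < s := by
    by_cases hB : B = 0
    · have hlt : B₀ ^ 2 < ρ ^ γ := hcase.resolve_left (by simp [hB])
      have : c < 0 := by rw [hc, hB]; nlinarith
      linarith
    · have hB2 : 0 < B ^ 2 := lt_of_le_of_ne (sq_nonneg _) (Ne.symm (pow_ne_zero 2 hB))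
      have h1 : c ≤ Real.sqrt (c ^ 2) := by
        rw [Real.sqrt_sq_eq_abs]; exact le_abs_self c
      have h2 : Real.sqrt (c ^ 2) < s := by
        rw [hs]; apply Real.sqrt_lt_sqrt (sq_nonneg c); nlinarith
      linarith
  have hdpos : 0 < d := by rw [hd]; linarith
  have hdne : d ≠ 0 := ne_of_gt hdpos
  have hfd : f * d = 4 * ρ ^ γ := by rw [hf]; field_simp
  have hsq : d ^ 2 + 2 * c * d = 4 * B ^ 2 * ρ ^ γ := by
    rw [hd]; nlinarith [hs2]
  have h1 : (B ^ 2 * f ^ 2 - 2 * c * f - 4 * ρ ^ γ) * d ^ 2 = 0 := by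
    linear_combination (B ^ 2 * f * d + 4 * B ^ 2 * ρ ^ γ - 2 * c * d) * hfd - 4 * ρ ^ γ * hsq
  have hquad : B ^ 2 * f ^ 2 - 2 * c * f - 4 * ρ ^ γ = 0 :=
    (mul_eq_zero.mp h1).resolve_right (pow_ne_zero 2 hdne)
  rw [hc] at hquad
  have hfpos : 0 < f := by rw [hf]; exact div_pos (by positivity) hdpos
  have hslt : s < c + 2 * ρ ^ γ := by
    rw [hs, Real.sqrt_lt' (by rw [hc]; nlinarith)]
    rw [hc]; nlinarith
  have hf2 : 2 < f := by
    rw [hf, lt_div_iff₀ hdpos, hd]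
    linarith
  have hfne : f ≠ 0 := ne_of_gt hfpos
  have hf2ne : f - 2 ≠ 0 := by intro h; nlinarith
  have hρne : ρ ≠ 0 := ne_of_gt hρ
  have hpow : ρ ^ (γ - 1) = ρ ^ γ / ρ := Real.rpow_sub_one hρne γ
  refine ⟨?_, fun _ => ?_, ?_⟩
  · rw [hα, hpow]
    field_simp
    linear_combination (-1) * hquad
  · rw [hα, hpow]
    field_simp
    linear_combination (-1) * hquad
  · rw [hα]
    exact div_pos (mul_pos (div_pos hB₀2 hρ) hfpos) (by linarith)
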